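/- Let d ≥ 1 be an integer, let R > 0, let f : ℂ → ℂ be holomorphic on {z : |z| > R} with polynomial growth at infinity (there exist C > 0 and m ∈ ℕ with |f(z)| ≤ C|z|^m for all |z| > R), and let c_{−1}, c_{0}, …, c_{d−2} be complex constants such that f'(z) + d·z^{d−1}·f(z) = Σ_{j=−1}^{d−2} c_j z^{j} for all |z| > R. Then c_{−1} = c_{0} = … = c_{d−2} = 0 and f is identically zero on {z : |z| > R}. (This is the directness of the sum in the decomposition 𝓜_p·e^{z^d} dz = d(𝓜_p·e^{z^d}) ⊕ ⊕_{j=−1}^{d−2} ℂ·z^{j}e^{z^d} dz, and together with the existence of the decomposition it shows that the quotient Ω_p([h])/d𝓞_p([h]) of differentials with exponential singularity of type h = z^d at ∞ modulo exact such differentials has dimension d, with basis the classes of z^{j}e^{z^d} dz, −1 ≤ j ≤ d−2.) -/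

import Mathlib

open Finset

open Finset Complex Metric

namespace MeromAux

variable {f : ℂ → ℂ} {R : ℝ}

lemma mem_S {z : ℂ} (hR : 0 < R) (hz : R < ‖z‖) : z ≠ 0 := by
  intro h; rw [h] at hz; simp at hz; linarith

/-- differentiability of `f z * z ^ n` on the region -/
lemma diffAt_mul_zpow (hR : 0 < R)
    (hfd : ∀ z : ℂ, R < ‖z‖ → DifferentiableAt ℂ f z) (n : ℤ)
    {z : ℂ} (hz : R < ‖z‖) :
    DifferentiableAt ℂ (fun z => f z * z ^ n) z :=
  (hfd z hz).mul (differentiableAt_zpow.2 (Or.inl (mem_S hR hz)))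

/-- radius independence -/
lemma circleInt_indep (hR : 0 < R)
    (hfd : ∀ z : ℂ, R < ‖z‖ → DifferentiableAt ℂ f z) (n : ℤ)
    {r : ℝ} (hr : R + 1 ≤ r) :
    (∮ z in C(0, r), f z * z ^ n) = ∮ z in C(0, R + 1), f z * z ^ n := by
  have h0 : (0:ℝ) < R + 1 := by linarith
  have key : ∀ w : ℂ, w ∈ closedBall (0:ℂ) r \ ball (0:ℂ) (R+1) → R < ‖w‖ := by
    intro w hw
    have h1 : ¬ (‖w‖ < R + 1) := by
      simpa [mem_ball, Complex.dist_eq] using hw.2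
    linarith [not_lt.1 h1]
  refine Complex.circleIntegral_eq_of_differentiable_on_annulus_off_countable h0 hr
    (Set.countable_empty) (fun w hw => ((diffAt_mul_zpow hR hfd n (key w hw)).continuousAt).continuousWithinAt) ?_
  intro w hw
  exact diffAt_mul_zpow hR hfd n (key w ⟨ball_subset_closedBall hw.1.1,
    fun h => hw.1.2 (ball_subset_closedBall h)⟩)

/-- Cauchy-type bound at radius r -/
lemma circleInt_bound (hR : 0 < R) {C : ℝ} (hC : 0 < C) {m : ℕ}
    (hgr : ∀ z : ℂ, R < ‖z‖ → ‖(f z)‖ ≤ C * (‖z‖) ^ m)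
    (n : ℤ) {r : ℝ} (hr : R < r) :
    ‖∮ z in C(0, r), f z * z ^ n‖ ≤ 2 * Real.pi * C * r ^ ((m : ℤ) + n + 1) := by
  have hr0 : (0:ℝ) < r := lt_trans hR hr
  have key : ∀ z ∈ sphere (0:ℂ) r, ‖f z * z ^ n‖ ≤ C * r ^ m * r ^ n := by
    intro z hz
    have hzr : ‖z‖ = r := by simpa [Complex.dist_eq] using hz
    have hz' : R < ‖z‖ := hzr ▸ hr
    rw [norm_mul, norm_zpow]
    rw [hzr]
    refine mul_le_mul_of_nonneg_right ?_ (zpow_nonneg hr0.le n)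
    have := hgr z hz'
    rwa [hzr] at this
  calc ‖∮ z in C(0, r), f z * z ^ n‖ ≤ 2 * Real.pi * r * (C * r ^ m * r ^ n) :=
        circleIntegral.norm_integral_le_of_norm_le_const hr0.le key
    _ = 2 * Real.pi * C * r ^ ((m : ℤ) + n + 1) := by
        rw [zpow_add₀ hr0.ne', zpow_add₀ hr0.ne', zpow_natCast, zpow_one]; ring

/-- integration by parts: circle integral of a derivative is zero -/
lemma circleInt_deriv (hR : 0 < R)
    (hfd : ∀ z : ℂ, R < ‖z‖ → DifferentiableAt ℂ f z) (k : ℤ)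
    {r : ℝ} (hr : R < r) :
    (∮ z in C(0, r), (deriv f z * z ^ k + (k : ℂ) * (f z * z ^ (k - 1)))) = 0 := by
  have hr0 : (0:ℝ) < r := lt_trans hR hr
  refine circleIntegral.integral_eq_zero_of_hasDerivWithinAt (f := fun z : ℂ => f z * z ^ k)
    hr0.le (fun z hz => ?_)
  have hzr : ‖z‖ = r := by simpa [Complex.dist_eq] using hz
  have hz' : R < ‖z‖ := hzr ▸ hr
  have h1 : HasDerivAt (fun z : ℂ => f z * z ^ k)
      (deriv f z * z ^ k + f z * ((k : ℂ) * z ^ (k - 1))) z :=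
    ((hfd z hz').hasDerivAt).mul (hasDerivAt_zpow k z (Or.inl (mem_S hR hz')))
  have : deriv f z * z ^ k + f z * ((k : ℂ) * z ^ (k - 1))
      = deriv f z * z ^ k + (k : ℂ) * (f z * z ^ (k - 1)) := by ring
  exact (this ▸ h1).hasDerivWithinAt

/-- circle integral of a finite sum -/
lemma circleInt_sum {ι : Type*} (s : Finset ι) (g : ι → ℂ → ℂ) {cc : ℂ} {r : ℝ}
    (hg : ∀ i ∈ s, CircleIntegrable (g i) cc r) :
    (∮ z in C(cc, r), ∑ i ∈ s, g i z) = ∑ i ∈ s, ∮ z in C(cc, r), g i z := by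
  simp only [circleIntegral, Finset.smul_sum]
  exact intervalIntegral.integral_finset_sum (fun i hi => (hg i hi).out)

lemma circleInt_add {g h : ℂ → ℂ} {cc : ℂ} {r : ℝ}
    (hg : CircleIntegrable g cc r) (hh : CircleIntegrable h cc r) :
    (∮ z in C(cc, r), (g z + h z)) = (∮ z in C(cc, r), g z) + ∮ z in C(cc, r), h z := by
  simp only [circleIntegral, smul_add]
  exact intervalIntegral.integral_add hg.out hh.out

/-- circle integral of `z ^ p` -/
lemma circleInt_zpow {r : ℝ} (hr : 0 < r) (p : ℤ) :
    (∮ z in C(0, r), z ^ p) = if p = -1 then 2 * Real.pi * Complex.I else 0 := by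
  split_ifs with hp
  · subst hp
    have := circleIntegral.integral_sub_inv_of_mem_ball (c := (0:ℂ)) (w := (0:ℂ)) (R := r)
      (by simpa using hr)
    simp only [sub_zero] at this
    simpa [zpow_neg_one] using this
  · have := circleIntegral.integral_sub_zpow_of_ne hp (0:ℂ) (0:ℂ) r
    simpa [sub_zero] using this

lemma circleIntegrable_mul_zpow (hR : 0 < R) {g : ℂ → ℂ}
    (hg : ∀ z : ℂ, R < ‖z‖ → ContinuousAt g z) (p : ℤ) {r : ℝ} (hr : R < r) :
    CircleIntegrable (fun z => g z * z ^ p) 0 r := by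
  have hr0 : (0:ℝ) < r := lt_trans hR hr
  refine ContinuousOn.circleIntegrable hr0.le (fun z hz => ?_)
  have hzr : ‖z‖ = r := by simpa [Complex.dist_eq] using hz
  have hz' : R < ‖z‖ := hzr ▸ hr
  exact (((hg z hz').mul ((differentiableAt_zpow.2 (Or.inl (mem_S hR hz'))).continuousAt))).continuousWithinAt

/-- The key relation coming from integrating the ODE against `z^(-k-1)`. -/
lemma key_relation (hR : 0 < R) {d : ℕ} (hd : 1 ≤ d) (c : ℤ → ℂ)
    (hfd : ∀ z : ℂ, R < ‖z‖ → DifferentiableAt ℂ f z)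
    (hfd' : ∀ z : ℂ, R < ‖z‖ → ContinuousAt (deriv f) z)
    (heq : ∀ z : ℂ, R < ‖z‖ →
      deriv f z + (d : ℂ) * z ^ (d - 1) * f z
        = ∑ j ∈ Finset.Icc (-1 : ℤ) ((d : ℤ) - 2), c j * z ^ j)
    (k : ℤ) :
    ((k : ℂ) + 1) * (∮ z in C(0, R+1), f z * z ^ (-(k+1) - 1))
      + (d : ℂ) * (∮ z in C(0, R+1), f z * z ^ (-(k + 1 - d) - 1))
      = (if k ∈ Finset.Icc (-1 : ℤ) ((d : ℤ) - 2) then c k else 0)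
          * (2 * Real.pi * Complex.I) := by
  set r : ℝ := R + 1 with hrdef
  have hr : R < r := by simp [hrdef]
  have hr0 : (0:ℝ) < r := lt_trans hR hr
  have hsph : ∀ z ∈ sphere (0:ℂ) r, R < ‖z‖ := by
    intro z hz
    have hzr : ‖z‖ = r := by simpa [Complex.dist_eq] using hz
    exact hzr ▸ hr
  have hcast : ((d : ℤ) : ℂ) = (d : ℂ) := by push_cast; ring
  have hexp : ∀ z : ℂ, z ≠ 0 → (z : ℂ) ^ (d - 1) * z ^ (-k - 1 : ℤ) = z ^ (-(k + 1 - d) - 1 : ℤ) := by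
    intro z hz0
    rw [← zpow_natCast z (d - 1)]
    rw [← zpow_add₀ hz0]
    congr 1
    have : ((d - 1 : ℕ) : ℤ) = (d : ℤ) - 1 := by omega
    rw [this]; ring
  -- the three-piece decomposition of the integrand
  have hcongr1 : Set.EqOn
      (fun z : ℂ => (deriv f z + (d : ℂ) * z ^ (d - 1) * f z) * z ^ (-k - 1 : ℤ))
      (fun z : ℂ => (deriv f z * z ^ (-k - 1 : ℤ)
          + (((-k - 1 : ℤ)) : ℂ) * (f z * z ^ ((-k - 1 : ℤ) - 1)))
        + (((k : ℂ) + 1) * (f z * z ^ (-(k+1) - 1 : ℤ))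
          + (d : ℂ) * (f z * z ^ (-(k + 1 - d) - 1 : ℤ)))) (sphere (0:ℂ) r) := by
    intro z hz
    have hz0 : z ≠ 0 := mem_S hR (hsph z hz)
    have e1 : ((-k - 1 : ℤ) - 1) = (-(k+1) - 1 : ℤ) := by ring
    have e2 := hexp z hz0
    simp only
    rw [e1, ← e2]
    push_cast
    ring
  have hI2 : CircleIntegrable
      (fun z : ℂ => ((k : ℂ) + 1) * (f z * z ^ (-(k+1) - 1 : ℤ))) 0 r := by
    have := (circleIntegrable_mul_zpow hR (fun z hz => (hfd z hz).continuousAt)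
      (-(k+1) - 1) hr)
    simpa [mul_assoc, CircleIntegrable] using this.const_mul ((k : ℂ) + 1)
  have hI3 : CircleIntegrable
      (fun z : ℂ => (d : ℂ) * (f z * z ^ (-(k + 1 - d) - 1 : ℤ))) 0 r := by
    have := (circleIntegrable_mul_zpow hR (fun z hz => (hfd z hz).continuousAt)
      (-(k + 1 - d) - 1) hr)
    simpa [mul_assoc, CircleIntegrable] using this.const_mul (d : ℂ)
  have hI1 : CircleIntegrable
      (fun z : ℂ => deriv f z * z ^ (-k - 1 : ℤ)
        + (((-k - 1 : ℤ)) : ℂ) * (f z * z ^ ((-k - 1 : ℤ) - 1))) 0 r := by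
    refine (circleIntegrable_mul_zpow hR hfd' (-k - 1) hr).add ?_
    have := (circleIntegrable_mul_zpow hR (fun z hz => (hfd z hz).continuousAt)
      ((-k - 1 : ℤ) - 1) hr)
    simpa [mul_assoc, CircleIntegrable] using this.const_mul (((-k - 1 : ℤ)) : ℂ)
  -- way 1
  have way1 : (∮ z in C(0, r), (deriv f z + (d : ℂ) * z ^ (d - 1) * f z) * z ^ (-k - 1 : ℤ))
      = ((k : ℂ) + 1) * (∮ z in C(0, r), f z * z ^ (-(k+1) - 1 : ℤ))
        + (d : ℂ) * (∮ z in C(0, r), f z * z ^ (-(k + 1 - d) - 1 : ℤ)) := by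
    rw [circleIntegral.integral_congr hr0.le hcongr1]
    have hI23 : CircleIntegrable (fun z : ℂ => ((k : ℂ) + 1) * (f z * z ^ (-(k+1) - 1 : ℤ))
        + (d : ℂ) * (f z * z ^ (-(k + 1 - d) - 1 : ℤ))) 0 r := by
      have := hI2.add hI3
      simpa [Pi.add_def] using this
    rw [circleInt_add hI1 hI23, circleInt_add hI2 hI3]
    rw [circleInt_deriv hR hfd (-k - 1) hr]
    have e2 : (∮ z in C(0, r), ((k : ℂ) + 1) * (f z * z ^ (-(k+1) - 1 : ℤ)))
        = ((k : ℂ) + 1) * (∮ z in C(0, r), f z * z ^ (-(k+1) - 1 : ℤ)) := by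
      simpa [smul_eq_mul] using
        circleIntegral.integral_smul (𝕜 := ℂ) ((k : ℂ) + 1)
          (fun z => f z * z ^ (-(k+1) - 1 : ℤ)) 0 r
    have e3 : (∮ z in C(0, r), (d : ℂ) * (f z * z ^ (-(k + 1 - d) - 1 : ℤ)))
        = (d : ℂ) * (∮ z in C(0, r), f z * z ^ (-(k + 1 - d) - 1 : ℤ)) := by
      simpa [smul_eq_mul] using
        circleIntegral.integral_smul (𝕜 := ℂ) ((d : ℂ))
          (fun z => f z * z ^ (-(k + 1 - d) - 1 : ℤ)) 0 r
    rw [e2, e3, zero_add]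
  -- way 2
  have hcongr2 : Set.EqOn
      (fun z : ℂ => (deriv f z + (d : ℂ) * z ^ (d - 1) * f z) * z ^ (-k - 1 : ℤ))
      (fun z : ℂ => ∑ j ∈ Finset.Icc (-1 : ℤ) ((d : ℤ) - 2), c j * z ^ (j - k - 1))
      (sphere (0:ℂ) r) := by
    intro z hz
    have hz' := hsph z hz
    have hz0 : z ≠ 0 := mem_S hR hz'
    simp only
    rw [heq z hz', Finset.sum_mul]
    refine Finset.sum_congr rfl (fun j hj => ?_)
    rw [mul_assoc, ← zpow_add₀ hz0]
    congr 2
    ring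
  have way2 : (∮ z in C(0, r), (deriv f z + (d : ℂ) * z ^ (d - 1) * f z) * z ^ (-k - 1 : ℤ))
      = (if k ∈ Finset.Icc (-1 : ℤ) ((d : ℤ) - 2) then c k else 0)
          * (2 * Real.pi * Complex.I) := by
    rw [circleIntegral.integral_congr hr0.le hcongr2]
    rw [circleInt_sum _ _ (fun j hj => ?_)]
    · have : ∀ j ∈ Finset.Icc (-1 : ℤ) ((d : ℤ) - 2),
          (∮ z in C(0, r), c j * z ^ (j - k - 1)) = if j = k then c j * (2 * Real.pi * Complex.I) else 0 := by
        intro j hj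
        have : (∮ z in C(0, r), c j * z ^ (j - k - 1))
            = c j * (∮ z in C(0, r), z ^ (j - k - 1)) := by
          simpa [smul_eq_mul] using
            circleIntegral.integral_smul (𝕜 := ℂ) (c j) (fun z => z ^ (j - k - 1)) 0 r
        rw [this, circleInt_zpow hr0]
        have hiff : (j - k - 1 = -1) ↔ (j = k) := by omega
        by_cases h : j = k
        · simp [h]
        · simp [h, hiff]
      rw [Finset.sum_congr rfl this, Finset.sum_ite_eq' (Finset.Icc (-1 : ℤ) ((d : ℤ) - 2)) k
        (fun j => c j * (2 * Real.pi * Complex.I))]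
      split_ifs with h <;> simp
    · -- integrability of each summand
      have h0 : ∀ z : ℂ, R < ‖z‖ → ContinuousAt (fun _ : ℂ => c j) z :=
        fun z _ => continuousAt_const
      have := (circleIntegrable_mul_zpow hR h0 (j - k - 1) hr)
      simpa using this
  rw [← way1, way2]

end MeromAux

/-- Directness of the sum `𝓜_p·e^{z^d} dz = d(𝓜_p·e^{z^d}) ⊕ ⊕_{j=-1}^{d-2} ℂ·z^j e^{z^d} dz`:
if `f` is holomorphic near `∞` with polynomial growth and
`f'(z) + d z^(d-1) f(z) = ∑_{j=-1}^{d-2} c_j z^j` for `|z| > R`, then all `c_j = 0` and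
`f ≡ 0` on `{|z| > R}`. -/
theorem merom_exp_direct_sum (d : ℕ) (hd : 1 ≤ d) (R : ℝ) (hR : 0 < R)
    (f : ℂ → ℂ) (c : ℤ → ℂ)
    (hf : DifferentiableOn ℂ f {z : ℂ | R < ‖z‖})
    (hgrow : ∃ C > (0:ℝ), ∃ m : ℕ, ∀ z : ℂ, R < ‖z‖ →
      ‖(f z)‖ ≤ C * (‖z‖) ^ m)
    (heq : ∀ z : ℂ, R < ‖z‖ →
      deriv f z + (d : ℂ) * z ^ (d - 1) * f z
        = ∑ j ∈ Finset.Icc (-1 : ℤ) ((d : ℤ) - 2), c j * z ^ j) :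
    (∀ j ∈ Finset.Icc (-1 : ℤ) ((d : ℤ) - 2), c j = 0) ∧
      ∀ z : ℂ, R < ‖z‖ → f z = 0 := by
  obtain ⟨C, hC, m, hgr⟩ := hgrow
  have hd1 : (1 : ℤ) ≤ (d : ℤ) := by exact_mod_cast hd
  have hSopen : IsOpen {z : ℂ | R < ‖z‖} :=
    isOpen_lt continuous_const continuous_norm
  have hfd : ∀ z : ℂ, R < ‖z‖ → DifferentiableAt ℂ f z :=
    fun z hz => hf.differentiableAt (hSopen.mem_nhds hz)
  have hAn : AnalyticOnNhd ℂ f {z : ℂ | R < ‖z‖} := hf.analyticOnNhd hSopen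
  have hfd' : ∀ z : ℂ, R < ‖z‖ → ContinuousAt (deriv f) z :=
    fun z hz => ((hAn.deriv) z hz).continuousAt
  set A : ℤ → ℂ := fun n => ∮ z in C(0, R + 1), f z * z ^ (-n - 1) with hAdef
  have hr1 : R < R + 1 := by linarith
  have hr10 : (0:ℝ) < R + 1 := by linarith
  -- the key relation
  have hRel : ∀ k : ℤ, ((k : ℂ) + 1) * A (k + 1) + (d : ℂ) * A (k + 1 - d)
      = (if k ∈ Finset.Icc (-1 : ℤ) ((d : ℤ) - 2) then c k else 0)
          * (2 * Real.pi * Complex.I) :=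
    fun k => MeromAux.key_relation hR hd c hfd hfd' heq k
  -- Cauchy bounds
  have hCB : ∀ n : ℤ, ∀ r : ℝ, R + 1 ≤ r → ‖A n‖ ≤ 2 * Real.pi * C * r ^ ((m : ℤ) - n) := by
    intro n r hr
    have hRr : R < r := lt_of_lt_of_le hr1 hr
    have h1 := MeromAux.circleInt_indep hR hfd (-n - 1) hr
    have h2 := MeromAux.circleInt_bound hR hC hgr (-n - 1) hRr
    rw [h1] at h2
    have e : (m : ℤ) + (-n - 1) + 1 = (m : ℤ) - n := by ring
    rw [e] at h2
    exact h2
  -- vanishing for large n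
  have hTop : ∀ n : ℤ, (m : ℤ) < n → A n = 0 := by
    intro n hn
    have hlim : Filter.Tendsto (fun r : ℝ => 2 * Real.pi * C * r ^ ((m : ℤ) - n))
        Filter.atTop (nhds 0) := by
      have h0 : Filter.Tendsto (fun r : ℝ => r ^ ((m : ℤ) - n)) Filter.atTop (nhds 0) :=
        tendsto_zpow_atTop_zero (by omega)
      simpa using h0.const_mul (2 * Real.pi * C)
    have hle : ‖A n‖ ≤ 0 := by
      refine ge_of_tendsto hlim ?_
      filter_upwards [Filter.eventually_ge_atTop (R + 1)] with r hr
      exact hCB n r hr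
    simpa using le_antisymm hle (norm_nonneg _)
  -- vanishing for nonnegative n
  have hNonneg : ∀ n : ℤ, 0 ≤ n → A n = 0 := by
    have key : ∀ j : ℕ, ∀ n : ℤ, 0 ≤ n → (m : ℤ) < n + j * d → A n = 0 := by
      intro j
      induction j with
      | zero => intro n hn hm; exact hTop n (by simpa using hm)
      | succ j ih =>
        intro n hn hm
        have h1 : A (n + d) = 0 := by
          refine ih (n + d) (by omega) ?_
          push_cast at hm ⊢
          linarith
        have h2 := hRel (n + d - 1)
        rw [if_neg (by rw [Finset.mem_Icc]; omega)] at h2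
        have e1 : n + (d:ℤ) - 1 + 1 = n + d := by ring
        have e2 : n + (d:ℤ) - 1 + 1 - d = n := by ring
        rw [e2, e1, h1, mul_zero, zero_add, zero_mul] at h2
        have hd0 : (d : ℂ) ≠ 0 := Nat.cast_ne_zero.mpr (by omega)
        exact (mul_eq_zero.mp h2).resolve_left hd0
    intro n hn
    refine key (m + 1) n hn ?_
    have h := mul_le_mul_of_nonneg_left hd1 (by positivity : (0:ℤ) ≤ (m:ℤ) + 1)
    push_cast
    linarith
  -- the downward recursion on the negative side
  have hRec : ∀ n : ℤ, n ≤ -1 → (d : ℝ) * ‖A (n - d)‖ = |(n : ℝ)| * ‖A n‖ := by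
    intro n hn
    have h2 := hRel (n - 1)
    rw [if_neg (by rw [Finset.mem_Icc]; omega)] at h2
    have e1 : n - 1 + 1 = n := by ring
    have e2 : n - 1 + 1 - (d:ℤ) = n - d := by ring
    rw [e2, e1, zero_mul] at h2
    have h3 : (d : ℂ) * A (n - d) = -(((n - 1 : ℤ) : ℂ) + 1) * (A n) := by
      rw [neg_mul]
      linear_combination h2
    have h4 := congrArg norm h3
    rw [norm_mul, norm_mul] at h4
    have e3 : ‖(d : ℂ)‖ = (d : ℝ) := by
      simp
    have e4 : ‖-(((n - 1 : ℤ) : ℂ) + 1)‖ = |(n : ℝ)| := by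
      have : -(((n - 1 : ℤ) : ℂ) + 1) = ((-n : ℤ) : ℂ) := by push_cast; ring
      rw [this]
      simp
    rw [e3, e4] at h4
    exact h4
  -- factorial growth estimate
  have hFact : ∀ n : ℤ, n ≤ -1 → ∀ j : ℕ,
      ‖A n‖ * (Nat.factorial j) ≤ (d : ℝ) ^ j * ‖A (n - j * d)‖ := by
    intro n hn j
    induction j with
    | zero => simp
    | succ j ih =>
      have hjd : (0:ℤ) ≤ (j : ℤ) * d := by positivity
      have hn' : n - (j : ℤ) * d ≤ -1 := by omega
      have h2 := hRec (n - (j : ℤ) * d) hn'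
      have hab : ((j : ℤ) + 1) ≤ |n - (j : ℤ) * d| := by
        rw [abs_of_nonpos (by omega)]
        have h3 : (j : ℤ) * 1 ≤ (j : ℤ) * d := by
          refine mul_le_mul_of_nonneg_left hd1 (by positivity)
        omega
      have habR : ((j : ℝ) + 1) ≤ |((n - (j : ℤ) * d : ℤ) : ℝ)| := by
        rw [← Int.cast_abs]
        exact_mod_cast hab
      have e5 : ((n - (j : ℤ) * d : ℤ) : ℝ) = (n : ℝ) - (j : ℝ) * d := by push_cast; ring
      have e6 : n - (j : ℤ) * d - d = n - ((j : ℕ) + 1 : ℕ) * d := by push_cast; ring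
      rw [e6] at h2
      have hd0 : (0:ℝ) < (d : ℝ) := by exact_mod_cast (by omega : 0 < d)
      have hA1 : (0:ℝ) ≤ ‖A (n - (j : ℤ) * d)‖ := norm_nonneg _
      have hA2 : (0:ℝ) ≤ ‖A (n - ((j : ℕ) + 1 : ℕ) * d)‖ := norm_nonneg _
      -- target
      have efact : (Nat.factorial (j + 1) : ℝ) = (Nat.factorial j : ℝ) * ((j : ℝ) + 1) := by
        rw [Nat.factorial_succ]; push_cast; ring
      calc ‖A n‖ * (Nat.factorial (j+1))
          = (‖A n‖ * Nat.factorial j) * ((j : ℝ) + 1) := by rw [efact]; ring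
        _ ≤ ((d : ℝ) ^ j * ‖A (n - j * d)‖) * ((j : ℝ) + 1) := by
            refine mul_le_mul_of_nonneg_right ih (by positivity)
        _ ≤ ((d : ℝ) ^ j * ‖A (n - j * d)‖) * |((n - (j : ℤ) * d : ℤ) : ℝ)| := by
            refine mul_le_mul_of_nonneg_left habR (by positivity)
        _ = (d : ℝ) ^ j * (|((n - (j : ℤ) * d : ℤ) : ℝ)| * ‖A (n - (j : ℤ) * d)‖) := by
            rw [e5]; ring
        _ = (d : ℝ) ^ j * ((d : ℝ) * ‖A (n - ((j : ℕ) + 1 : ℕ) * d)‖) := by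
            rw [← h2]
        _ = (d : ℝ) ^ (j + 1) * ‖A (n - ((j : ℕ) + 1 : ℕ) * d)‖ := by ring
  -- vanishing on the negative side
  have hNeg : ∀ n : ℤ, n ≤ -1 → A n = 0 := by
    intro n hn
    set K : ℝ := 2 * Real.pi * C * (R + 1) ^ ((m : ℤ) - n) with hKdef
    have hK0 : 0 ≤ K := by
      have : (0:ℝ) < (R+1) ^ ((m : ℤ) - n) := zpow_pos hr10 _
      have hpi := Real.pi_pos
      positivity
    set q : ℝ := (d : ℝ) * (R + 1) ^ (d : ℕ) with hqdef
    have hbound : ∀ j : ℕ, ‖A n‖ ≤ K * (q ^ j / (Nat.factorial j)) := by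
      intro j
      have hfj : (0:ℝ) < (Nat.factorial j : ℝ) := by exact_mod_cast j.factorial_pos
      have h1 := hFact n hn j
      have h2 := hCB (n - j * d) (R + 1) le_rfl
      have e : (R+1:ℝ) ^ ((m : ℤ) - (n - j * d)) = (R+1) ^ ((m : ℤ) - n) * ((R+1) ^ (d : ℕ)) ^ j := by
        rw [show (m : ℤ) - (n - j * d) = ((m : ℤ) - n) + (d : ℤ) * (j : ℤ) by ring,
          zpow_add₀ hr10.ne', zpow_mul]
        norm_cast
      have h3 : ‖A n‖ * (Nat.factorial j) ≤ (d : ℝ) ^ j * (2 * Real.pi * C *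
          ((R+1) ^ ((m : ℤ) - n) * ((R+1) ^ (d : ℕ)) ^ j)) := by
        refine le_trans h1 ?_
        rw [← e]
        exact mul_le_mul_of_nonneg_left h2 (by positivity)
      have h4 : (d : ℝ) ^ j * (2 * Real.pi * C *
          ((R+1) ^ ((m : ℤ) - n) * ((R+1) ^ (d : ℕ)) ^ j)) = K * q ^ j := by
        rw [hKdef, hqdef, mul_pow]; ring
      rw [h4] at h3
      have h5 : ‖A n‖ ≤ K * q ^ j / (Nat.factorial j) := by
        rw [le_div_iff₀ hfj]; exact h3
      calc ‖A n‖ ≤ K * q ^ j / (Nat.factorial j) := h5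
        _ = K * (q ^ j / (Nat.factorial j)) := by ring
    have hlim : Filter.Tendsto (fun j : ℕ => K * (q ^ j / (Nat.factorial j)))
        Filter.atTop (nhds 0) := by
      have := FloorSemiring.tendsto_pow_div_factorial_atTop (K := ℝ) q
      simpa using this.const_mul K
    have hle : ‖A n‖ ≤ 0 := ge_of_tendsto hlim (Filter.Eventually.of_forall hbound)
    simpa using le_antisymm hle (norm_nonneg _)
  have hAll : ∀ n : ℤ, A n = 0 := by
    intro n
    rcases le_or_gt n (-1) with h | h
    · exact hNeg n h
    · exact hNonneg n (by omega)
  -- constants vanish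
  have hc0 : ∀ j ∈ Finset.Icc (-1 : ℤ) ((d : ℤ) - 2), c j = 0 := by
    intro j hj
    have h := hRel j
    rw [if_pos hj, hAll, hAll, mul_zero, mul_zero, add_zero] at h
    have h2 : c j * (2 * (Real.pi:ℂ) * Complex.I) = 0 := h.symm
    rcases mul_eq_zero.mp h2 with h3 | h3
    · exact h3
    · exact absurd h3 Complex.two_pi_I_ne_zero
  refine ⟨hc0, ?_⟩
  -- Part 2: the ODE now reads `(f e^{z^d})' = 0`
  have heq0 : ∀ z : ℂ, R < ‖z‖ →
      deriv f z + (d : ℂ) * z ^ (d - 1) * f z = 0 := by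
    intro z hz
    rw [heq z hz]
    exact Finset.sum_eq_zero (fun j hj => by rw [hc0 j hj, zero_mul])
  -- vanishing along rays where `Re (w^d) < 0`
  have hray : ∀ w : ℂ, R < ‖w‖ → (w ^ d).re < 0 → f w = 0 := by
    intro w hw hwre
    set h : ℂ → ℂ := fun u => f (u * w) * Complex.exp ((u * w) ^ d) with hhdef
    have hder : ∀ u : ℂ, R < ‖(u * w)‖ → HasDerivAt h 0 u := by
      intro u hu
      have h1 : HasDerivAt (fun u : ℂ => u * w) w u := by
        simpa using (hasDerivAt_id u).mul_const w
      have h3 : HasDerivAt (fun u : ℂ => f (u * w)) (deriv f (u * w) * w) u :=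
        ((hfd _ hu).hasDerivAt).comp u h1
      have h5 : HasDerivAt (fun u : ℂ => (u * w) ^ d) ((d:ℂ) * (u*w) ^ (d-1) * w) u :=
        (hasDerivAt_pow d (u*w)).comp u h1
      have h6 : HasDerivAt (fun u : ℂ => Complex.exp ((u * w) ^ d))
          (Complex.exp ((u*w)^d) * ((d:ℂ) * (u*w) ^ (d-1) * w)) u := h5.cexp
      have h7 := h3.mul h6
      have h8 : deriv f (u * w) * w * Complex.exp ((u*w)^d)
          + f (u * w) * (Complex.exp ((u*w)^d) * ((d:ℂ) * (u*w) ^ (d-1) * w)) = 0 := by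
        have h9 := heq0 (u * w) hu
        linear_combination (w * Complex.exp ((u*w)^d)) * h9
      rw [h8] at h7
      exact h7
    have habs : ∀ t : ℝ, 1 ≤ t → R < ‖((t:ℂ) * w)‖ := by
      intro t ht
      have : ‖((t:ℂ) * w)‖ = t * ‖w‖ := by
        rw [norm_mul, Complex.norm_real, Real.norm_eq_abs, abs_of_pos (by linarith)]
      rw [this]
      nlinarith [norm_nonneg w]
    have hconst : ∀ t : ℝ, 1 ≤ t → h ((t:ℝ):ℂ) = h ((1:ℝ):ℂ) := by
      intro b hb
      have hcont : ContinuousOn (fun t : ℝ => h ((t:ℝ):ℂ)) (Set.Icc 1 b) := by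
        intro t ht
        exact (((hder t (habs t ht.1)).comp_ofReal)).continuousAt.continuousWithinAt
      have hderiv : ∀ t ∈ Set.Ico (1:ℝ) b,
          HasDerivWithinAt (fun t : ℝ => h ((t:ℝ):ℂ)) 0 (Set.Ici t) t := by
        intro t ht
        exact (((hder t (habs t ht.1)).comp_ofReal)).hasDerivWithinAt
      exact constant_of_has_deriv_right_zero hcont hderiv b ⟨hb, le_rfl⟩
    -- quantitative bound
    set a : ℝ := -(w ^ d).re with hadef
    have ha : 0 < a := by simpa [hadef] using hwre
    have hbound : ∀ t : ℝ, 1 ≤ t →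
        ‖h ((1:ℝ):ℂ)‖ ≤ C * (‖w‖) ^ m * (t ^ m * Real.exp (-(a * t))) := by
      intro t ht
      have ht0 : (0:ℝ) < t := by linarith
      rw [← hconst t ht]
      have e1 : ‖h ((t:ℝ):ℂ)‖
          = ‖(f ((t:ℂ) * w))‖ * Real.exp ((((t:ℂ) * w) ^ d).re) := by
        rw [hhdef]
        simp only [norm_mul, Complex.norm_exp]
      have e2 : (((t:ℂ) * w) ^ d).re = t ^ d * (w ^ d).re := by
        rw [mul_pow, show ((t:ℂ)) ^ d = ((t ^ d : ℝ) : ℂ) by push_cast; ring,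
          Complex.re_ofReal_mul]
      have e3 : ‖((t:ℂ) * w)‖ = t * ‖w‖ := by
        rw [norm_mul, Complex.norm_real, Real.norm_eq_abs, abs_of_pos ht0]
      have hfb : ‖(f ((t:ℂ) * w))‖ ≤ C * (t * ‖w‖) ^ m := by
        have := hgr ((t:ℂ) * w) (habs t ht)
        rwa [e3] at this
      have hexpb : Real.exp ((((t:ℂ) * w) ^ d).re) ≤ Real.exp (-(a * t)) := by
        rw [e2]
        refine Real.exp_le_exp.mpr ?_
        have htd : t ≤ t ^ d := by
          calc t = t ^ 1 := (pow_one t).symm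
            _ ≤ t ^ d := pow_le_pow_right₀ ht hd
        have : t ^ d * (w ^ d).re ≤ t * (w ^ d).re := by
          nlinarith
        calc t ^ d * (w ^ d).re ≤ t * (w ^ d).re := this
          _ = -(a * t) := by rw [hadef]; ring
      calc ‖h ((t:ℝ):ℂ)‖
          = ‖(f ((t:ℂ) * w))‖ * Real.exp ((((t:ℂ) * w) ^ d).re) := e1
        _ ≤ (C * (t * ‖w‖) ^ m) * Real.exp (-(a * t)) := by
            refine mul_le_mul hfb hexpb (Real.exp_pos _).le ?_
            positivity
        _ = C * (‖w‖) ^ m * (t ^ m * Real.exp (-(a * t))) := by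
            rw [mul_pow]; ring
    have hlim : Filter.Tendsto
        (fun t : ℝ => C * (‖w‖) ^ m * (t ^ m * Real.exp (-(a * t))))
        Filter.atTop (nhds 0) := by
      have h0 := tendsto_rpow_mul_exp_neg_mul_atTop_nhds_zero (m : ℝ) a ha
      have h1 : Filter.Tendsto (fun t : ℝ => t ^ m * Real.exp (-(a * t)))
          Filter.atTop (nhds 0) := by
        refine h0.congr' ?_
        filter_upwards [Filter.eventually_ge_atTop (0:ℝ)] with t ht
        rw [Real.rpow_natCast, neg_mul]
      simpa using h1.const_mul (C * (‖w‖) ^ m)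
    have hle : ‖h ((1:ℝ):ℂ)‖ ≤ 0 := by
      refine ge_of_tendsto hlim ?_
      filter_upwards [Filter.eventually_ge_atTop (1:ℝ)] with t ht
      exact hbound t ht
    have hz : h ((1:ℝ):ℂ) = 0 := by
      simpa using le_antisymm hle (norm_nonneg _)
    rw [hhdef] at hz
    simp only [Complex.ofReal_one, one_mul] at hz
    exact (mul_eq_zero.mp hz).resolve_right (Complex.exp_ne_zero _)
  -- the region is preconnected
  have hconn : IsPreconnected {z : ℂ | R < ‖z‖} := by
    have himg : {z : ℂ | R < ‖z‖}
        = (fun p : ℝ × ℝ => ((p.1 : ℂ)) * Complex.exp ((p.2 : ℂ) * Complex.I)) ''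
          (Set.Ioi R ×ˢ (Set.univ : Set ℝ)) := by
      ext z
      constructor
      · intro hz
        exact ⟨(‖z‖, Complex.arg z), ⟨hz, trivial⟩, Complex.norm_mul_exp_arg_mul_I z⟩
      · rintro ⟨⟨r, θ⟩, ⟨hr, -⟩, rfl⟩
        have hr' : R < r := hr
        simp only [Set.mem_setOf_eq, norm_mul, Complex.norm_real, Real.norm_eq_abs,
          Complex.norm_exp_ofReal_mul_I, mul_one]
        rw [abs_of_pos (lt_trans hR hr')]
        exact hr'
    rw [himg]
    refine (isPreconnected_Ioi.prod isPreconnected_univ).image _ ?_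
    refine Continuous.continuousOn ?_
    exact (Complex.continuous_ofReal.comp continuous_fst).mul
      (Complex.continuous_exp.comp
        ((Complex.continuous_ofReal.comp continuous_snd).mul continuous_const))
  -- a base point where f vanishes in a neighborhood
  set z₀ : ℂ := ((R+1 : ℝ) : ℂ) * Complex.exp (((Real.pi / d : ℝ) : ℂ) * Complex.I) with hz₀def
  have hz₀abs : ‖z₀‖ = R + 1 := by
    rw [hz₀def, norm_mul, Complex.norm_real, Real.norm_eq_abs, Complex.norm_exp_ofReal_mul_I, mul_one,
      abs_of_pos hr10]
  have hz₀S : R < ‖z₀‖ := by rw [hz₀abs]; linarith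
  have hz₀pow : (z₀ ^ d).re < 0 := by
    have hd0 : (d : ℂ) ≠ 0 := Nat.cast_ne_zero.mpr (by omega)
    have e1 : Complex.exp (((Real.pi / d : ℝ) : ℂ) * Complex.I) ^ d
        = Complex.exp ((Real.pi : ℂ) * Complex.I) := by
      rw [← Complex.exp_nat_mul]
      congr 1
      push_cast
      field_simp
    have e2 : z₀ ^ d = (((-((R+1) ^ d) : ℝ)) : ℂ) := by
      rw [hz₀def, mul_pow, e1, Complex.exp_pi_mul_I]
      push_cast
      ring
    rw [e2, Complex.ofReal_re]
    have h0 : (0:ℝ) < (R+1) ^ d := by positivity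
    linarith
  have hWopen : IsOpen ({z : ℂ | R < ‖z‖} ∩ {z : ℂ | (z ^ d).re < 0}) :=
    hSopen.inter (isOpen_lt (Complex.continuous_re.comp (continuous_pow d)) continuous_const)
  have hev : f =ᶠ[nhds z₀] 0 := by
    refine Filter.eventuallyEq_of_mem (hWopen.mem_nhds ⟨hz₀S, hz₀pow⟩) ?_
    intro z hz
    exact hray z hz.1 hz.2
  intro z hz
  exact hAn.eqOn_zero_of_preconnected_of_eventuallyEq_zero hconn hz₀S hev hz
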